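/- In bij, define the monoidal product (k,P) ⊗ (k',P') = (k+k', S · diag(P,P')), where S is the permutation matrix [[1ₘ,0,0,0],[0,0,1_{m'},0],[0,1ₖ,0,0],[0,0,0,1_{k'}]] interleaving the blocks (m, k, m', k') into (m, m', k, k'). Then ⊗ is well-defined on equivalence classes: if P' is replaced by diag(1ₘ,σ)·P and Q' by diag(1ₙ,ρ)·Q, the resulting tensor differs from (k,P)⊗(l,Q) by the permutation matrix diag(1_{m+n}, σ, ρ), using the identity S · diag(diag(1ₘ,σ), diag(1ₙ,ρ)) = diag(1ₘ,1ₙ,σ,ρ) · S. -/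

import Mathlib

open Matrix

/-- The interleaving permutation matrix `S` reordering the blocks `(m, k, m', k')` into
`(m, m', k, k')`: `S = [[1ₘ,0,0,0],[0,0,1_{m'},0],[0,1ₖ,0,0],[0,0,0,1_{k'}]]`. -/
def interleave (m k m' k' : ℕ) :
    Matrix ((Fin m ⊕ Fin m') ⊕ (Fin k ⊕ Fin k'))
      ((Fin m ⊕ Fin k) ⊕ (Fin m' ⊕ Fin k')) (ZMod 2) :=
  Matrix.fromBlocks (Matrix.fromBlocks 1 0 0 0) (Matrix.fromBlocks 0 0 1 0)
    (Matrix.fromBlocks 0 1 0 0) (Matrix.fromBlocks 0 0 0 1)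

/-- the monoidal product of `bij`, `(k,P) ⊗ (k',Q) = (k+k', S·diag(P,Q))`, is
well-defined on equivalence classes: replacing `P` by `diag(1ₘ,σ)·P` and `Q` by
`diag(1ₙ,ρ)·Q` changes the tensor by the permutation matrix `diag(1ₘ,1ₙ,σ,ρ)`, thanks to
the commutation identity `S · diag(diag(1ₘ,σ), diag(1ₙ,ρ)) = diag(diag(1ₘ,1ₙ), diag(σ,ρ)) · S`. -/
local notation:70 A:70 " ⬝ₘ " B:71 => @HMul.hMul _ _ _ Matrix.instHMulOfFintypeOfMulOfAddCommMonoid A B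

theorem bij_tensor_well_defined_aux (m k n l : ℕ)
    (πP : Equiv.Perm (Fin m ⊕ Fin k)) (πQ : Equiv.Perm (Fin n ⊕ Fin l))
    (πσ : Equiv.Perm (Fin k)) (πρ : Equiv.Perm (Fin l)) :
    letI P := πP.permMatrix (ZMod 2)
    letI Q := πQ.permMatrix (ZMod 2)
    letI σ := πσ.permMatrix (ZMod 2)
    letI ρ := πρ.permMatrix (ZMod 2)
    letI S := interleave m k n l
    (S ⬝ₘ Matrix.fromBlocks (Matrix.fromBlocks 1 0 0 σ) 0 0 (Matrix.fromBlocks 1 0 0 ρ) =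
      Matrix.fromBlocks 1 0 0 (Matrix.fromBlocks σ 0 0 ρ) ⬝ₘ S) ∧
    (S ⬝ₘ Matrix.fromBlocks (Matrix.fromBlocks 1 0 0 σ ⬝ₘ P) 0 0
          (Matrix.fromBlocks 1 0 0 ρ ⬝ₘ Q) =
      Matrix.fromBlocks 1 0 0 (Matrix.fromBlocks σ 0 0 ρ) ⬝ₘ
        (S ⬝ₘ Matrix.fromBlocks P 0 0 Q)) := by
  constructor
  · simp [interleave, Matrix.fromBlocks_multiply]
  · have h : interleave m k n l ⬝ₘ
        Matrix.fromBlocks (Matrix.fromBlocks 1 0 0 (πσ.permMatrix (ZMod 2))) 0 0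
          (Matrix.fromBlocks 1 0 0 (πρ.permMatrix (ZMod 2))) =
        Matrix.fromBlocks 1 0 0
          (Matrix.fromBlocks (πσ.permMatrix (ZMod 2)) 0 0 (πρ.permMatrix (ZMod 2))) ⬝ₘ
          interleave m k n l := by
      simp [interleave, Matrix.fromBlocks_multiply]
    have h2 : Matrix.fromBlocks ((Matrix.fromBlocks 1 0 0 (πσ.permMatrix (ZMod 2)) : Matrix (Fin m ⊕ Fin k) (Fin m ⊕ Fin k) (ZMod 2)) ⬝ₘ πP.permMatrix (ZMod 2)) 0 0
          ((Matrix.fromBlocks 1 0 0 (πρ.permMatrix (ZMod 2)) : Matrix (Fin n ⊕ Fin l) (Fin n ⊕ Fin l) (ZMod 2)) ⬝ₘ πQ.permMatrix (ZMod 2)) =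
        Matrix.fromBlocks (Matrix.fromBlocks 1 0 0 (πσ.permMatrix (ZMod 2))) 0 0
          (Matrix.fromBlocks 1 0 0 (πρ.permMatrix (ZMod 2))) ⬝ₘ
        Matrix.fromBlocks (πP.permMatrix (ZMod 2)) 0 0 (πQ.permMatrix (ZMod 2)) := by
      simp [Matrix.fromBlocks_multiply]
    rw [h2, ← Matrix.mul_assoc, h, Matrix.mul_assoc]

theorem bij_tensor_well_defined (m k n l : ℕ)
    (πP : Equiv.Perm (Fin m ⊕ Fin k)) (πQ : Equiv.Perm (Fin n ⊕ Fin l))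
    (πσ : Equiv.Perm (Fin k)) (πρ : Equiv.Perm (Fin l)) :
    letI P := πP.permMatrix (ZMod 2)
    letI Q := πQ.permMatrix (ZMod 2)
    letI σ := πσ.permMatrix (ZMod 2)
    letI ρ := πρ.permMatrix (ZMod 2)
    letI S := interleave m k n l
    -- the commutation identity for S
    (S * Matrix.fromBlocks (Matrix.fromBlocks 1 0 0 σ) 0 0 (Matrix.fromBlocks 1 0 0 ρ) =
      Matrix.fromBlocks 1 0 0 (Matrix.fromBlocks σ 0 0 ρ) * S) ∧
    -- well-definedness of the tensor on equivalence classes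
    (S * Matrix.fromBlocks (Matrix.fromBlocks 1 0 0 σ * P) 0 0
          (Matrix.fromBlocks 1 0 0 ρ * Q) =
      Matrix.fromBlocks 1 0 0 (Matrix.fromBlocks σ 0 0 ρ) *
        (S * Matrix.fromBlocks P 0 0 Q)) := by
  exact bij_tensor_well_defined_aux m k n l πP πQ πσ πρ
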